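/- arXiv:2206.11525 — 6 statements merged into one kernel-verified Lean document; each statement's English description precedes it below -/
import Mathlib

section
/- A kidney exchange solution X is rejection-proof if and only if for every agent i and every subset U of agent i's vertices, the total agent-i value of exchanges in X that intersect U is at least β(U), the maximum agent-i value of a feasible solution using exchanges entirely contained in U. -/
open Finset
open scoped Classical

variable {V E P : Type*}

/-- A feasible kidney exchange solution: a set of pairwise vertex-disjoint exchanges. -/
def Feasible (Vs : E → Finset V) (X : Finset E) : Prop :=
  ∀ e ∈ X, ∀ f ∈ X, e ≠ f → Disjoint (Vs e) (Vs f)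

/-- An exchange is internal to agent `i` if all its vertices belong to `i`. -/
def Internal (Vs : E → Finset V) (VA : P → Finset V) (i : P) (e : E) : Prop :=
  Vs e ⊆ VA i

/-- A shared exchange is one internal to no agent. -/
def Shared (Vs : E → Finset V) (VA : P → Finset V) (e : E) : Prop :=
  ¬ ∃ i, Internal Vs VA i e

/-- A rejection strategy of agent `i` against proposed solution `X`. -/
def RejStrat [DecidableEq V] (Vs : E → Finset V) (VA : P → Finset V) (i : P)
    (X Xi : Finset E) : Prop :=
  Feasible Vs Xi ∧ (∀ e ∈ Xi, (Vs e ∩ VA i).Nonempty) ∧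
    (∀ e ∈ Xi, Shared Vs VA e → e ∈ X)

/-- The value of a solution to agent `i`. -/
def agentVal (w : P → E → ℝ) (i : P) (X : Finset E) : ℝ := ∑ e ∈ X, w i e

/-- `X` is rejection-proof: RKEP(X,i) ≤ w^i(X) for every agent `i`, i.e. every
rejection strategy has agent value at most that of `X`. -/
def RejectionProof [DecidableEq V] (Vs : E → Finset V) (VA : P → Finset V)
    (w : P → E → ℝ) (X : Finset E) : Prop :=
  ∀ i Xi, RejStrat Vs VA i X Xi → agentVal w i Xi ≤ agentVal w i X

/-- The subset rejection constraint for agent `i` and `U ⊆ V^i`: the agent-i value of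
exchanges of `X` intersecting `U` is at least β(U), i.e. at least the value of every
feasible solution all of whose exchanges lie inside `U`. -/
def SubsetOK [DecidableEq V] (Vs : E → Finset V) (VA : P → Finset V)
    (w : P → E → ℝ) (X : Finset E) (i : P) (U : Finset V) : Prop :=
  ∀ Y : Finset E, Feasible Vs Y → (∀ e ∈ Y, Vs e ⊆ U) →
    agentVal w i Y ≤ ∑ e ∈ X.filter (fun e => (Vs e ∩ U).Nonempty), w i e

/-- X is rejection-proof iff all subset rejection constraints hold. -/
theorem rejection_proof_iff_subset_constraints [DecidableEq V] [DecidableEq E]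
    (Vs : E → Finset V) (VA : P → Finset V) (w : P → E → ℝ)
    (hne : ∀ e, (Vs e).Nonempty)
    (hpart : ∀ i j : P, i ≠ j → Disjoint (VA i) (VA j))
    (hcover : ∀ v : V, ∃ i : P, v ∈ VA i)
    (hw : ∀ i e, 0 ≤ w i e)
    (hzero : ∀ (i : P) (e : E), ¬ (Vs e ∩ VA i).Nonempty → w i e = 0)
    (X : Finset E) (hX : Feasible Vs X) :
    RejectionProof Vs VA w X ↔
      ∀ i : P, ∀ U ⊆ VA i, SubsetOK Vs VA w X i U := by

  constructor
  · intro hRP i U hU Y hYfeas hYU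
    set Z := X.filter (fun e => ¬ (Vs e ∩ U).Nonempty ∧ (Vs e ∩ VA i).Nonempty) with hZdef
    have hZX : ∀ e ∈ Z, e ∈ X := fun e he => (Finset.mem_filter.1 he).1
    have hZprop : ∀ e ∈ Z, ¬ (Vs e ∩ U).Nonempty ∧ (Vs e ∩ VA i).Nonempty :=
      fun e he => (Finset.mem_filter.1 he).2
    have hYZ : Disjoint Y Z := by
      rw [Finset.disjoint_left]
      intro e heY heZ
      obtain ⟨v, hv⟩ := hne e
      exact (hZprop e heZ).1 ⟨v, Finset.mem_inter.2 ⟨hv, hYU e heY hv⟩⟩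
    have hcross : ∀ e ∈ Y, ∀ f ∈ Z, Disjoint (Vs e) (Vs f) := by
      intro e he f hf
      rw [Finset.disjoint_left]
      intro v hve hvf
      exact (hZprop f hf).1 ⟨v, Finset.mem_inter.2 ⟨hvf, hYU e he hve⟩⟩
    have hstrat : RejStrat Vs VA i X (Y ∪ Z) := by
      refine ⟨?_, ?_, ?_⟩
      · intro e he f hf hef
        rcases Finset.mem_union.1 he with he | he <;>
          rcases Finset.mem_union.1 hf with hf | hf
        · exact hYfeas e he f hf hef
        · exact hcross e he f hf
        · exact (hcross f hf e he).symm
        · exact hX e (hZX e he) f (hZX f hf) hef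
      · intro e he
        rcases Finset.mem_union.1 he with he | he
        · obtain ⟨v, hv⟩ := hne e
          exact ⟨v, Finset.mem_inter.2 ⟨hv, hU (hYU e he hv)⟩⟩
        · exact (hZprop e he).2
      · intro e he hsh
        rcases Finset.mem_union.1 he with he | he
        · exact absurd ⟨i, fun v hv => hU (hYU e he hv)⟩ hsh
        · exact hZX e he
    have h := hRP i (Y ∪ Z) hstrat
    rw [agentVal, Finset.sum_union hYZ] at h
    have hsplit : agentVal w i X
        = ∑ e ∈ X.filter (fun e => (Vs e ∩ U).Nonempty), w i e
          + ∑ e ∈ X.filter (fun e => ¬ (Vs e ∩ U).Nonempty), w i e :=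
      (Finset.sum_filter_add_sum_filter_not X _ _).symm
    have hrest : ∑ e ∈ X.filter (fun e => ¬ (Vs e ∩ U).Nonempty), w i e
        = ∑ e ∈ Z, w i e := by
      refine (Finset.sum_subset ?_ ?_).symm
      · intro e he
        exact Finset.mem_filter.2 ⟨hZX e he, (hZprop e he).1⟩
      · intro e he heZ
        apply hzero
        intro hni
        have h1 := Finset.mem_filter.1 he
        exact heZ (Finset.mem_filter.2 ⟨h1.1, h1.2, hni⟩)
    rw [hsplit, hrest] at h
    have : agentVal w i Y = ∑ e ∈ Y, w i e := rfl
    linarith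
  · intro hSub i Xi hXi
    obtain ⟨hfeas, hint, hsh⟩ := hXi
    set S := Xi.filter (fun e => Shared Vs VA e) with hSdef
    set N := Xi.filter (fun e => ¬ Shared Vs VA e) with hNdef
    set U := VA i \ S.biUnion Vs with hUdef
    have hUsub : U ⊆ VA i := Finset.sdiff_subset
    have hNU : ∀ e ∈ N, Vs e ⊆ U := by
      intro e he v hv
      have heXi : e ∈ Xi := (Finset.mem_filter.1 he).1
      have hnsh : ¬ Shared Vs VA e := (Finset.mem_filter.1 he).2
      have hex : ∃ j, Internal Vs VA j e := not_not.mp hnsh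
      obtain ⟨j, hj⟩ := hex
      have hji : j = i := by
        by_contra hji
        obtain ⟨u, hu⟩ := hint e heXi
        have h1 := Finset.mem_inter.1 hu
        exact (Finset.disjoint_left.1 (hpart j i hji)) (hj h1.1) h1.2
      subst hji
      refine Finset.mem_sdiff.2 ⟨hj hv, ?_⟩
      intro hvb
      obtain ⟨f, hfS, hvf⟩ := Finset.mem_biUnion.1 hvb
      have hfXi : f ∈ Xi := (Finset.mem_filter.1 hfS).1
      have hef : e ≠ f := by
        intro h; subst h; exact hnsh (Finset.mem_filter.1 hfS).2
      exact (Finset.disjoint_left.1 (hfeas e heXi f hfXi hef)) hv hvf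
    have hNfeas : Feasible Vs N := fun e he f hf hef =>
      hfeas e (Finset.filter_subset _ _ he) f (Finset.filter_subset _ _ hf) hef
    have hkey := hSub i U hUsub N hNfeas hNU
    simp only [agentVal] at hkey ⊢
    have hSX : S ⊆ X := fun e he =>
      hsh e (Finset.mem_filter.1 he).1 (Finset.mem_filter.1 he).2
    have hdisj : Disjoint S (X.filter (fun e => (Vs e ∩ U).Nonempty)) := by
      rw [Finset.disjoint_left]
      intro e heS heF
      obtain ⟨v, hv⟩ := (Finset.mem_filter.1 heF).2
      have h1 := Finset.mem_inter.1 hv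
      exact (Finset.mem_sdiff.1 h1.2).2 (Finset.mem_biUnion.2 ⟨e, heS, h1.1⟩)
    have hsum : ∑ e ∈ S, w i e
        + ∑ e ∈ X.filter (fun e => (Vs e ∩ U).Nonempty), w i e ≤ ∑ e ∈ X, w i e := by
      rw [← Finset.sum_union hdisj]
      apply Finset.sum_le_sum_of_subset_of_nonneg
      · exact Finset.union_subset hSX (Finset.filter_subset _ _)
      · intro e _ _; exact hw i e
    have hXi_split : ∑ e ∈ Xi, w i e = ∑ e ∈ S, w i e + ∑ e ∈ N, w i e :=
      (Finset.sum_filter_add_sum_filter_not Xi _ _).symm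
    rw [hXi_split]
    linarith
end

section
/- If a solution X satisfies all subset rejection constraints (for every agent i and every U ⊆ V^i, the agent-i value of exchanges in X intersecting U is at least β(U)), then X is rejection-proof. -/
open Finset
open scoped Classical

variable {V E P : Type*}

/-- if all subset rejection constraints hold, X is rejection-proof. -/
theorem rejection_proof_of_subset_constraints [DecidableEq V] [DecidableEq E]
    (Vs : E → Finset V) (VA : P → Finset V) (w : P → E → ℝ)
    (hne : ∀ e, (Vs e).Nonempty)
    (hpart : ∀ i j : P, i ≠ j → Disjoint (VA i) (VA j))
    (hw : ∀ i e, 0 ≤ w i e)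
    (hzero : ∀ (i : P) (e : E), ¬ (Vs e ∩ VA i).Nonempty → w i e = 0)
    (X : Finset E) (hX : Feasible Vs X)
    (h : ∀ i : P, ∀ U ⊆ VA i, SubsetOK Vs VA w X i U) :
    RejectionProof Vs VA w X := by
  intro i Xi hXi
  obtain ⟨hfeas, hnon, hsh⟩ := hXi
  set S := Xi.filter (fun e => Shared Vs VA e) with hSdef
  set I := Xi.filter (fun e => ¬ Shared Vs VA e) with hIdef
  set U := (VA i) \ S.biUnion (fun f => Vs f) with hUdef
  have hUsub : U ⊆ VA i := sdiff_subset
  have hIU : ∀ e ∈ I, Vs e ⊆ U := by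
    intro e he
    simp only [hIdef, mem_filter] at he
    obtain ⟨heXi, hnsh⟩ := he
    obtain ⟨j, hj⟩ := not_not.mp hnsh
    obtain ⟨v, hv⟩ := hnon e heXi
    rw [mem_inter] at hv
    have hij : i = j := by
      by_contra hne'
      exact (hpart i j hne').forall_ne_finset hv.2 (hj hv.1) rfl
    have hint : Vs e ⊆ VA i := hij ▸ hj
    intro v hv'
    rw [hUdef, mem_sdiff]
    refine ⟨hint hv', ?_⟩
    intro hvB
    obtain ⟨f, hfS, hvf⟩ := mem_biUnion.mp hvB
    simp only [hSdef, mem_filter] at hfS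
    have hef : e ≠ f := by
      intro hEq; exact hnsh (hEq ▸ hfS.2)
    exact (hfeas e heXi f hfS.1 hef).forall_ne_finset hv' hvf rfl
  have hIfeas : Feasible Vs I := by
    intro e he f hf hef
    simp only [hIdef, mem_filter] at he hf
    exact hfeas e he.1 f hf.1 hef
  have hval := h i U hUsub I hIfeas hIU
  have hsplit : agentVal w i Xi = agentVal w i S + agentVal w i I := by
    simp only [agentVal, hSdef, hIdef]
    exact (sum_filter_add_sum_filter_not Xi _ _).symm
  have hSsubX : S ⊆ X := by
    intro e he
    simp only [hSdef, mem_filter] at he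
    exact hsh e he.1 he.2
  have hdisj : Disjoint (X.filter (fun e => (Vs e ∩ U).Nonempty)) S := by
    rw [disjoint_left]
    intro e heF heS
    simp only [mem_filter] at heF
    obtain ⟨v, hv⟩ := heF.2
    rw [mem_inter, hUdef, mem_sdiff] at hv
    exact hv.2.2 (mem_biUnion.mpr ⟨e, heS, hv.1⟩)
  have hsum : ∑ e ∈ X.filter (fun e => (Vs e ∩ U).Nonempty), w i e + agentVal w i S
      ≤ agentVal w i X := by
    rw [agentVal, agentVal, ← sum_union hdisj]
    refine sum_le_sum_of_subset_of_nonneg ?_ (fun e _ _ => hw i e)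
    exact union_subset (filter_subset _ _) hSsubX
  rw [hsplit]
  linarith
end

section
/- Let X and Y be feasible solutions such that (a) the set of shared exchanges of Y is a subset of the shared exchanges of X, and (b) w^i(Y) ≥ w^i(X) for every agent i. If X is rejection-proof then Y is rejection-proof. -/
open Finset
open scoped Classical

variable {V E P : Type*}

/-- if Y has fewer shared exchanges than X and is weakly preferred by all
agents, rejection-proofness of X implies rejection-proofness of Y. -/
theorem rejection_proof_of_dominating [DecidableEq V]
    (Vs : E → Finset V) (VA : P → Finset V) (w : P → E → ℝ)
    (X Y : Finset E) (hX : Feasible Vs X) (hY : Feasible Vs Y)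
    (hshared : ∀ e ∈ Y, Shared Vs VA e → e ∈ X)
    (hval : ∀ i : P, agentVal w i X ≤ agentVal w i Y)
    (hrp : RejectionProof Vs VA w X) :
    RejectionProof Vs VA w Y := by
  intro i Xi hXi
  obtain ⟨hfeas, hmeet, hsh⟩ := hXi
  have : RejStrat Vs VA i X Xi :=
    ⟨hfeas, hmeet, fun e he hse => hshared e (hsh e he hse) hse⟩
  exact le_trans (hrp i Xi this) (hval i)
end

section
/- The MaxInt mechanism is rejection-proof: any feasible solution X such that for each agent i, X ∩ E^i is a maximum agent-i-weight feasible solution among those using only internal exchanges of agent i (i.e., Σ_{e∈X∩E^i} w^i_e = β(V^i)), satisfies RKEP(X,i) ≤ w^i(X) for every agent i. -/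
open Finset
open scoped Classical

variable {V E P : Type*}

/-- the MaxInt mechanism is rejection-proof. -/
theorem maxint_rejection_proof [DecidableEq V]
    (Vs : E → Finset V) (VA : P → Finset V) (w : P → E → ℝ)
    (hne : ∀ e, (Vs e).Nonempty)
    (hpart : ∀ i j : P, i ≠ j → Disjoint (VA i) (VA j))
    (hw : ∀ i e, 0 ≤ w i e)
    (hzero : ∀ (i j : P) (e : E), i ≠ j → Internal Vs VA j e → w i e = 0)
    (X : Finset E) (hX : Feasible Vs X)
    (hmax : ∀ i : P, ∀ Y : Finset E, Feasible Vs Y →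
      (∀ e ∈ Y, Internal Vs VA i e) →
      agentVal w i Y ≤ ∑ e ∈ X.filter (fun e => Internal Vs VA i e), w i e) :
    RejectionProof Vs VA w X := by
  intro i Xi hXi
  obtain ⟨hfeas, _hmeet, hsh⟩ := hXi
  set A := Xi.filter (fun e => Internal Vs VA i e) with hA
  set S := Xi.filter (fun e => ¬ Internal Vs VA i e) with hSdef
  have hsplit : agentVal w i Xi = ∑ e ∈ A, w i e + ∑ e ∈ S, w i e := by
    rw [agentVal,
      ← Finset.sum_filter_add_sum_filter_not Xi (fun e => Internal Vs VA i e)]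
  -- internal part
  have hApart : ∑ e ∈ A, w i e ≤ ∑ e ∈ X.filter (fun e => Internal Vs VA i e), w i e := by
    have := hmax i A
      (fun e he f hf hne' =>
        hfeas e (Finset.mem_filter.mp he).1 f (Finset.mem_filter.mp hf).1 hne')
      (fun e he => (Finset.mem_filter.mp he).2)
    simpa [agentVal] using this
  -- non-internal part: only shared exchanges contribute
  have hSeq : ∑ e ∈ S.filter (fun e => Shared Vs VA e), w i e = ∑ e ∈ S, w i e := by
    apply Finset.sum_filter_of_ne
    intro e he hwne
    intro hns
    apply hwne
    obtain ⟨j, hj⟩ := hns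
    have hji : j ≠ i := by
      rintro rfl
      exact (Finset.mem_filter.mp he).2 hj
    exact hzero i j e (Ne.symm hji) hj
  have hSsub : S.filter (fun e => Shared Vs VA e) ⊆ X := by
    intro e he
    have he' := Finset.mem_filter.mp he
    exact hsh e (Finset.mem_filter.mp he'.1).1 he'.2
  have hdis : Disjoint (X.filter (fun e => Internal Vs VA i e))
      (S.filter (fun e => Shared Vs VA e)) := by
    apply Finset.disjoint_left.mpr
    intro e he1 he2
    have h1 := (Finset.mem_filter.mp he1).2
    have h2 := (Finset.mem_filter.mp (Finset.mem_filter.mp he2).1).2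
    exact h2 h1
  have hunion : ∑ e ∈ X.filter (fun e => Internal Vs VA i e), w i e
      + ∑ e ∈ S.filter (fun e => Shared Vs VA e), w i e ≤ ∑ e ∈ X, w i e := by
    rw [← Finset.sum_union hdis]
    apply Finset.sum_le_sum_of_subset_of_nonneg
    · exact Finset.union_subset (Finset.filter_subset _ _) hSsub
    · intro e _ _; exact hw i e
  calc agentVal w i Xi = ∑ e ∈ A, w i e + ∑ e ∈ S, w i e := hsplit
    _ = ∑ e ∈ A, w i e + ∑ e ∈ S.filter (fun e => Shared Vs VA e), w i e := by rw [hSeq]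
    _ ≤ ∑ e ∈ X.filter (fun e => Internal Vs VA i e), w i e
        + ∑ e ∈ S.filter (fun e => Shared Vs VA e), w i e := by
        exact add_le_add_left hApart _
    _ ≤ ∑ e ∈ X, w i e := hunion
    _ = agentVal w i X := rfl
end

section
/- In the kidney exchange game induced by a rejection-proof solution X, the strategy profile in which every agent accepts (X^i = { e ∈ X : V(e) ∩ V^i ≠ ∅ } for all i) is a pure Nash equilibrium: no agent can strictly increase its realized value by unilaterally deviating to another rejection strategy, given that all other agents accept. -/
open Finset
open scoped Classical

variable {V E P : Type*}

/-- for a rejection-proof X, the all-accept profile is a pure Nash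
equilibrium: any unilateral deviation of agent i yields payoff at most w^i(X). -/
theorem accept_profile_is_nash [DecidableEq V] [DecidableEq E] [DecidableEq P]
    (Vs : E → Finset V) (VA : P → Finset V) (w : P → E → ℝ)
    (hw : ∀ i e, 0 ≤ w i e)
    (hzero : ∀ (i : P) (e : E), ¬ (Vs e ∩ VA i).Nonempty → w i e = 0)
    (X : Finset E) (hX : Feasible Vs X)
    (hrp : RejectionProof Vs VA w X)
    (i : P) (Xi : Finset E) (hstrat : RejStrat Vs VA i X Xi)
    (X' : Finset E)
    (hX' : ∀ e : E, e ∈ X' ↔ ∀ j : P, (Vs e ∩ VA j).Nonempty →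
        e ∈ (if j = i then Xi else X.filter (fun f => (Vs f ∩ VA j).Nonempty))) :
    agentVal w i X' ≤ agentVal w i X := by
  have h1 : agentVal w i X' ≤ agentVal w i Xi := by
    unfold agentVal
    have hsub : X'.filter (fun e => (Vs e ∩ VA i).Nonempty) ⊆ Xi := by
      intro e he
      rw [mem_filter] at he
      have := (hX' e).mp he.1 i he.2
      simpa using this
    calc ∑ e ∈ X', w i e
        = ∑ e ∈ X'.filter (fun e => (Vs e ∩ VA i).Nonempty), w i e := by
          rw [← Finset.sum_filter_add_sum_filter_not X'
            (fun e => (Vs e ∩ VA i).Nonempty)]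
          have : ∑ e ∈ X'.filter (fun e => ¬ (Vs e ∩ VA i).Nonempty), w i e = 0 := by
            apply Finset.sum_eq_zero
            intro e he
            exact hzero i e (mem_filter.mp he).2
          rw [this, add_zero]
      _ ≤ ∑ e ∈ Xi, w i e := by
          apply Finset.sum_le_sum_of_subset_of_nonneg hsub
          intro e _ _; exact hw i e
  exact h1.trans (hrp i Xi hstrat)
end

section
/- Any feasible solution X satisfying the subset rejection constraints for all singleton-exchange-inducing subsets need not be rejection-proof: there exists an instance and a feasible solution X such that for every agent i and every U ⊆ V^i that is the vertex set of a single internal exchange, the constraint Σ_{e∈X: V(e)∩U≠∅} w^i_e ≥ β(U) holds, yet X is not rejection-proof. -/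
open Finset
open scoped Classical

variable {V E P : Type*}

/-- subset rejection constraints restricted to vertex sets of single
internal exchanges are strictly weaker than full rejection-proofness. -/
theorem singleton_exchange_constraints_insufficient :
    ∃ (n m k : ℕ) (Vs : Fin m → Finset (Fin n)) (VA : Fin k → Finset (Fin n))
      (w : Fin k → Fin m → ℝ) (X : Finset (Fin m)),
      (∀ i e, 0 ≤ w i e) ∧
      Feasible Vs X ∧
      (∀ (i : Fin k) (e₀ : Fin m), Internal Vs VA i e₀ →
        SubsetOK Vs VA w X i (Vs e₀)) ∧
      ¬ (∀ i : Fin k, ∀ U ⊆ VA i, SubsetOK Vs VA w X i U) := by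

  classical
  refine ⟨4, 3, 1, ![{0,1}, {2,3}, {1,2}], fun _ => Finset.univ,
    fun _ _ => 1, {2}, fun _ _ => zero_le_one, ?_, ?_, ?_⟩
  · intro e he f hf hef
    simp only [Finset.mem_singleton] at he hf
    exact absurd (he.trans hf.symm) hef
  · intro i e₀ _ Y hY hYsub
    have hYsub' : Y ⊆ {e₀} := by
      intro e he
      have h := hYsub e he
      simp only [Finset.mem_singleton]
      fin_cases e <;> fin_cases e₀ <;> first | rfl | (exfalso; revert h; decide)
    have hRHS : ({2} : Finset (Fin 3)).filter
        (fun e => ((![{0,1}, {2,3}, {1,2}] : Fin 3 → Finset (Fin 4)) e ∩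
          (![{0,1}, {2,3}, {1,2}] : Fin 3 → Finset (Fin 4)) e₀).Nonempty) = {2} := by
      fin_cases e₀ <;> decide
    rw [hRHS]
    calc agentVal (fun _ _ => (1:ℝ)) i Y ≤ agentVal (fun _ _ => (1:ℝ)) i {e₀} := by
          unfold agentVal
          exact Finset.sum_le_sum_of_subset_of_nonneg hYsub' (fun _ _ _ => zero_le_one)
      _ = 1 := by simp [agentVal]
      _ = ∑ e ∈ ({2} : Finset (Fin 3)), (1:ℝ) := by simp
  · intro h
    have := h 0 Finset.univ (Finset.subset_univ _) {0, 1}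
      (by intro e he f hf hef
          fin_cases he <;> fin_cases hf <;> revert hef <;> decide)
      (fun e _ => Finset.subset_univ _)
    have hfil : ({2} : Finset (Fin 3)).filter
        (fun e => ((![{0,1}, {2,3}, {1,2}] : Fin 3 → Finset (Fin 4)) e ∩
          Finset.univ).Nonempty) = {2} := by decide
    rw [hfil] at this
    simp [agentVal] at this
end
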